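/- Let F : ℝ^d → ℝ^d be L-Lipschitz and monotone, let z₀ ∈ ℝ^d be deterministic, and let (ξ_{k/2})_{k≥0} (indexed by half-integers 0, 1/2, 1, 3/2, …) be mutually independent ℝ^d-valued random variables with E[ξ_{k/2}] = 0 and E[‖ξ_{k/2}‖²] = σ_{k/2}² < ∞. Let {α_k}_{k≥0} ⊂ (0,∞) and {β_k}_{k≥0} with β₀ = 1, β_k ∈ (0,1) for k ≥ 1, define the stochastic iterates z_{k+1/2} = z_k + β_k(z₀ − z_k) − (1−β_k)α_k (F z_k + ξ_k) and z_{k+1} = z_k + β_k(z₀ − z_k) − α_k (F z_{k+1/2} + ξ_{k+1/2}), so in particular z₁ = z₀ − α₀(F z₀ + ξ₀). Then: (i) |E[⟨F z₁, ξ₀⟩]| ≤ L α₀ σ₀²; (ii) for all k ≥ 0, |E[⟨F z_{k+1/2}, ξ_k⟩]| ≤ L(1−β_k)α_k σ_k²; and (iii) for all k ≥ 0, |E[⟨F z_{k+1}, ξ_{k+1/2}⟩]| ≤ L α_k σ_{k+1/2}². -/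

import Mathlib

open MeasureTheory ProbabilityTheory
open scoped RealInnerProductSpace

lemma sfeg_indepFun_const {Ω β γ : Type*} [MeasurableSpace Ω] [MeasurableSpace β]
    [MeasurableSpace γ] (μ : Measure Ω) [IsProbabilityMeasure μ] (c : β) (g : Ω → γ) :
    IndepFun (fun _ => c) g μ := by
  rw [indepFun_iff_measure_inter_preimage_eq_mul]
  intro s t hs ht
  by_cases h : c ∈ s <;>
    simp [Set.preimage_const, h]

lemma sfeg_coord_abs_le {d : ℕ} (x : EuclideanSpace ℝ (Fin d)) (i : Fin d) :
    |x i| ≤ ‖x‖ := by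
  have h1 : |x i| = Real.sqrt (‖x i‖ ^ 2) := by
    rw [Real.sqrt_sq_eq_abs]; simp [abs_abs, Real.norm_eq_abs]
  rw [h1, EuclideanSpace.norm_eq]
  apply Real.sqrt_le_sqrt
  exact Finset.single_le_sum (f := fun j => ‖x j‖ ^ 2) (fun j _ => by positivity)
    (Finset.mem_univ i)

lemma sfeg_key_bound {d : ℕ} {Ω : Type*} [MeasurableSpace Ω] (μ : Measure Ω)
    [IsProbabilityMeasure μ]
    (L c : ℝ) (hL : 0 ≤ L) (hc : 0 ≤ c)
    (F : EuclideanSpace ℝ (Fin d) → EuclideanSpace ℝ (Fin d))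
    (hLip : ∀ z z' : EuclideanSpace ℝ (Fin d), ‖F z - F z'‖ ≤ L * ‖z - z'‖)
    (Y ξn : Ω → EuclideanSpace ℝ (Fin d))
    (hY : Measurable Y) (hξm : Measurable ξn)
    (hYint : Integrable Y μ)
    (hind : IndepFun Y ξn μ)
    (hξ2 : Integrable (fun ω => ‖ξn ω‖ ^ 2) μ)
    (hξ0 : ∫ ω, ξn ω ∂μ = 0) :
    |∫ ω, ⟪F (Y ω - c • ξn ω), ξn ω⟫ ∂μ| ≤ L * c * ∫ ω, ‖ξn ω‖ ^ 2 ∂μ := by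
  have hFc : Continuous F := by
    have : LipschitzWith ⟨L, hL⟩ F := by
      apply LipschitzWith.of_dist_le_mul
      intro x y
      rw [dist_eq_norm, dist_eq_norm]; exact hLip x y
    exact this.continuous
  have hFm : Measurable F := hFc.measurable
  have hFnorm : ∀ x : EuclideanSpace ℝ (Fin d), ‖F x‖ ≤ ‖F 0‖ + L * ‖x‖ := by
    intro x
    calc ‖F x‖ = ‖F 0 + (F x - F 0)‖ := by rw [add_sub_cancel]
    _ ≤ ‖F 0‖ + ‖F x - F 0‖ := norm_add_le _ _
    _ ≤ ‖F 0‖ + L * ‖x - 0‖ := by linarith [hLip x 0]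
    _ = ‖F 0‖ + L * ‖x‖ := by rw [sub_zero]
  -- integrability of ξn
  have hξint : Integrable ξn μ := by
    refine Integrable.mono' (g := fun ω => 1 + ‖ξn ω‖ ^ 2)
      ((integrable_const (1:ℝ)).add hξ2) hξm.aestronglyMeasurable ?_
    filter_upwards with ω
    have h := norm_nonneg (ξn ω)
    nlinarith [sq_nonneg (‖ξn ω‖ - 1)]
  have hFYint : Integrable (fun ω => F (Y ω)) μ := by
    refine Integrable.mono' ((integrable_const (‖F 0‖)).add (hYint.norm.const_mul L))
      ((hFm.comp hY).aestronglyMeasurable) ?_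
    filter_upwards with ω
    exact hFnorm (Y ω)
  set X : Ω → EuclideanSpace ℝ (Fin d) := fun ω => Y ω - c • ξn ω with hX
  have hXm : Measurable X := hY.sub (hξm.const_smul c)
  have ht1m : Measurable (fun ω => ⟪F (X ω) - F (Y ω), ξn ω⟫) :=
    ((hFm.comp hXm).sub (hFm.comp hY)).inner hξm
  have ht1bd : ∀ ω, |⟪F (X ω) - F (Y ω), ξn ω⟫| ≤ L * c * ‖ξn ω‖ ^ 2 := by
    intro ω
    calc |⟪F (X ω) - F (Y ω), ξn ω⟫| ≤ ‖F (X ω) - F (Y ω)‖ * ‖ξn ω‖ :=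
        abs_real_inner_le_norm _ _
    _ ≤ (L * ‖X ω - Y ω‖) * ‖ξn ω‖ :=
        mul_le_mul_of_nonneg_right (hLip _ _) (norm_nonneg _)
    _ = L * c * ‖ξn ω‖ ^ 2 := by
        have : X ω - Y ω = -(c • ξn ω) := by simp [hX]
        rw [this, norm_neg, norm_smul, Real.norm_eq_abs, abs_of_nonneg hc]
        ring
  have ht1int : Integrable (fun ω => ⟪F (X ω) - F (Y ω), ξn ω⟫) μ := by
    refine Integrable.mono' (hξ2.const_mul (L * c)) ht1m.aestronglyMeasurable ?_
    filter_upwards with ω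
    simpa [Real.norm_eq_abs] using ht1bd ω
  -- the cross term vanishes
  have hFiint : ∀ i : Fin d, Integrable (fun ω => F (Y ω) i) μ := by
    intro i
    refine Integrable.mono' hFYint.norm
      (((measurable_pi_apply i).comp (WithLp.measurable_ofLp 2 _)).comp (hFm.comp hY)).aestronglyMeasurable ?_
    filter_upwards with ω
    simpa [Real.norm_eq_abs] using sfeg_coord_abs_le (F (Y ω)) i
  have hGiint : ∀ i : Fin d, Integrable (fun ω => ξn ω i) μ := by
    intro i
    refine Integrable.mono' hξint.norm (((measurable_pi_apply i).comp (WithLp.measurable_ofLp 2 _)).comp hξm).aestronglyMeasurable ?_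
    filter_upwards with ω
    simpa [Real.norm_eq_abs] using sfeg_coord_abs_le (ξn ω) i
  have hindi : ∀ i : Fin d, IndepFun (fun ω => F (Y ω) i) (fun ω => ξn ω i) μ := by
    intro i
    exact hind.comp ((measurable_pi_apply i).comp ((WithLp.measurable_ofLp 2 _).comp hFm))
      ((measurable_pi_apply i).comp (WithLp.measurable_ofLp 2 _))
  have hGi0 : ∀ i : Fin d, ∫ ω, ξn ω i ∂μ = 0 := by
    intro i
    have h1 : ∀ ω, ξn ω i = ⟪EuclideanSpace.single i (1:ℝ), ξn ω⟫ := by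
      intro ω; rw [EuclideanSpace.inner_single_left]; simp
    simp_rw [h1]
    rw [integral_inner hξint, hξ0, inner_zero_right]
  have hprodint : ∀ i : Fin d, Integrable (fun ω => F (Y ω) i * ξn ω i) μ := by
    intro i
    exact (hindi i).integrable_mul (hFiint i) (hGiint i)
  have ht2sum : ∀ ω, ⟪F (Y ω), ξn ω⟫ = ∑ i : Fin d, F (Y ω) i * ξn ω i := by
    intro ω
    simp [PiLp.inner_apply, RCLike.inner_apply, conj_trivial, mul_comm]
  have ht2int : Integrable (fun ω => ⟪F (Y ω), ξn ω⟫) μ := by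
    simp_rw [ht2sum]
    exact integrable_finset_sum _ (fun i _ => hprodint i)
  have ht2zero : ∫ ω, ⟪F (Y ω), ξn ω⟫ ∂μ = 0 := by
    simp_rw [ht2sum]
    rw [integral_finset_sum _ (fun i _ => hprodint i)]
    apply Finset.sum_eq_zero
    intro i _
    rw [(hindi i).integral_fun_mul_eq_mul_integral (hFiint i).aestronglyMeasurable (hGiint i).aestronglyMeasurable,
      hGi0 i, mul_zero]
  have hsplit : ∀ ω, ⟪F (X ω), ξn ω⟫
      = ⟪F (X ω) - F (Y ω), ξn ω⟫ + ⟪F (Y ω), ξn ω⟫ := by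
    intro ω; rw [inner_sub_left]; ring
  calc |∫ ω, ⟪F (X ω), ξn ω⟫ ∂μ|
      = |∫ ω, (⟪F (X ω) - F (Y ω), ξn ω⟫ + ⟪F (Y ω), ξn ω⟫) ∂μ| := by
        simp_rw [hsplit]
    _ = |∫ ω, ⟪F (X ω) - F (Y ω), ξn ω⟫ ∂μ + ∫ ω, ⟪F (Y ω), ξn ω⟫ ∂μ| := by
        rw [integral_add ht1int ht2int]
    _ = |∫ ω, ⟪F (X ω) - F (Y ω), ξn ω⟫ ∂μ| := by rw [ht2zero, add_zero]
    _ ≤ ∫ ω, |⟪F (X ω) - F (Y ω), ξn ω⟫| ∂μ := by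
        simpa [Real.norm_eq_abs] using
          norm_integral_le_integral_norm (fun ω => ⟪F (X ω) - F (Y ω), ξn ω⟫) (μ := μ)
    _ ≤ ∫ ω, L * c * ‖ξn ω‖ ^ 2 ∂μ := by
        apply integral_mono ht1int.abs (hξ2.const_mul _)
        intro ω; exact ht1bd ω
    _ = L * c * ∫ ω, ‖ξn ω‖ ^ 2 ∂μ := by rw [integral_const_mul]

lemma sfeg_indep_tuple {d : ℕ} {Ω : Type*} [MeasurableSpace Ω] {μ : Measure Ω}
    (ξ : ℕ → Ω → EuclideanSpace ℝ (Fin d)) (hmeas : ∀ n, Measurable (ξ n))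
    (hindep : iIndepFun ξ μ) (n m : ℕ) (h : n ≤ m) :
    IndepFun (fun ω (i : Fin n) => ξ i ω) (ξ m) μ := by
  have hD : Disjoint (Finset.range n) ({m} : Finset ℕ) := by
    simp only [Finset.disjoint_singleton_right, Finset.mem_range]
    omega
  have h1 := hindep.indepFun_finset (Finset.range n) {m} hD hmeas
  have h2 := h1.comp (φ := fun v (i : Fin n) => v ⟨i, Finset.mem_range.mpr i.isLt⟩)
      (ψ := fun v => v ⟨m, Finset.mem_singleton_self m⟩)
      (_mγ' := (inferInstance : MeasurableSpace (EuclideanSpace ℝ (Fin d))))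
      (measurable_pi_lambda _ fun i => measurable_pi_apply _) (measurable_pi_apply _)
  exact h2
theorem sfeg_bounded_noise_correlations
    {d : ℕ} {Ω : Type*} [MeasurableSpace Ω] (μ : Measure Ω) [IsProbabilityMeasure μ]
    (L : ℝ) (hL : 0 < L)
    (F : EuclideanSpace ℝ (Fin d) → EuclideanSpace ℝ (Fin d))
    (hLip : ∀ z z' : EuclideanSpace ℝ (Fin d), ‖F z - F z'‖ ≤ L * ‖z - z'‖)
    (hMono : ∀ z z' : EuclideanSpace ℝ (Fin d), 0 ≤ ⟪F z - F z', z - z'⟫)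
    (z0 : EuclideanSpace ℝ (Fin d))
    (ξ : ℕ → Ω → EuclideanSpace ℝ (Fin d))
    (hmeas : ∀ n, Measurable (ξ n))
    (hindep : iIndepFun ξ μ)
    (hmean : ∀ n, ∫ ω, ξ n ω ∂μ = 0)
    (σsq : ℕ → ℝ)
    (hint : ∀ n, Integrable (fun ω => ‖ξ n ω‖ ^ 2) μ)
    (hvar : ∀ n, ∫ ω, ‖ξ n ω‖ ^ 2 ∂μ = σsq n)
    (α β : ℕ → ℝ)
    (hα : ∀ k, 0 < α k)
    (hβ0 : β 0 = 1)
    (hβ : ∀ k : ℕ, 1 ≤ k → β k ∈ Set.Ioo (0 : ℝ) 1)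
    (z w : ℕ → Ω → EuclideanSpace ℝ (Fin d))
    (hz0 : ∀ ω, z 0 ω = z0)
    (hw : ∀ (k : ℕ) (ω : Ω), w k ω = z k ω + β k • (z0 - z k ω)
      - ((1 - β k) * α k) • (F (z k ω) + ξ (2 * k) ω))
    (hz1 : ∀ ω : Ω, z 1 ω = z0 - α 0 • (F z0 + ξ 0 ω))
    (hz : ∀ (k : ℕ), 1 ≤ k → ∀ ω : Ω, z (k + 1) ω = z k ω + β k • (z0 - z k ω)
      - α k • (F (w k ω) + ξ (2 * k + 1) ω)) :
    |∫ ω, ⟪F (z 1 ω), ξ 0 ω⟫ ∂μ| ≤ L * α 0 * σsq 0 ∧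
    (∀ k : ℕ, |∫ ω, ⟪F (w k ω), ξ (2 * k) ω⟫ ∂μ|
      ≤ L * (1 - β k) * α k * σsq (2 * k)) ∧
    (∀ k : ℕ, |∫ ω, ⟪F (z (k + 1) ω), ξ (2 * k + 1) ω⟫ ∂μ|
      ≤ L * α k * σsq (2 * k + 1)) := by
  have hFc : Continuous F := by
    have : LipschitzWith ⟨L, hL.le⟩ F := by
      apply LipschitzWith.of_dist_le_mul
      intro x y
      rw [dist_eq_norm, dist_eq_norm]; exact hLip x y
    exact this.continuous
  have hFm : Measurable F := hFc.measurable
  have hFnorm : ∀ x : EuclideanSpace ℝ (Fin d), ‖F x‖ ≤ ‖F 0‖ + L * ‖x‖ := by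
    intro x
    calc ‖F x‖ = ‖F 0 + (F x - F 0)‖ := by rw [add_sub_cancel]
    _ ≤ ‖F 0‖ + ‖F x - F 0‖ := norm_add_le _ _
    _ ≤ ‖F 0‖ + L * ‖x - 0‖ := by linarith [hLip x 0]
    _ = ‖F 0‖ + L * ‖x‖ := by rw [sub_zero]
  have hξint : ∀ n, Integrable (ξ n) μ := by
    intro n
    refine Integrable.mono' (g := fun ω => 1 + ‖ξ n ω‖ ^ 2)
      ((integrable_const (1:ℝ)).add (hint n)) (hmeas n).aestronglyMeasurable ?_
    filter_upwards with ω
    nlinarith [sq_nonneg (‖ξ n ω‖ - 1), norm_nonneg (ξ n ω)]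
  have Fcomp_int : ∀ g : Ω → EuclideanSpace ℝ (Fin d), Measurable g → Integrable g μ →
      Integrable (fun ω => F (g ω)) μ := by
    intro g hgm hgi
    refine Integrable.mono' ((integrable_const (‖F 0‖)).add (hgi.norm.const_mul L))
      ((hFm.comp hgm).aestronglyMeasurable) ?_
    filter_upwards with ω
    exact hFnorm (g ω)
  have σnn : ∀ n, 0 ≤ σsq n := by
    intro n
    rw [← hvar n]
    exact integral_nonneg fun ω => by positivity
  -- factorization of the iterates through the noise tuples
  have zfact : ∀ k : ℕ, ∃ g : (Fin (2*k) → EuclideanSpace ℝ (Fin d)) →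
      EuclideanSpace ℝ (Fin d),
      Measurable g ∧ ∀ ω, z k ω = g (fun i => ξ i ω) := by
    intro k
    induction k with
    | zero => exact ⟨fun _ => z0, measurable_const, fun ω => hz0 ω⟩
    | succ k ih =>
      rcases Nat.eq_zero_or_pos k with hk | hk
      · subst hk
        refine ⟨fun v => z0 - α 0 • (F z0 + v ⟨0, by omega⟩), ?_, ?_⟩
        · fun_prop
        · intro ω; rw [hz1 ω]
      · obtain ⟨g, hgm, hgz⟩ := ih
        have hle : 2*k ≤ 2*(k+1) := by omega
        have hA : Measurable fun v : Fin (2*(k+1)) → EuclideanSpace ℝ (Fin d) =>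
            g (fun i => v (Fin.castLE hle i)) :=
          hgm.comp (measurable_pi_lambda _ fun i => measurable_pi_apply _)
        refine ⟨fun v =>
          g (fun i => v (Fin.castLE hle i))
            + β k • (z0 - g (fun i => v (Fin.castLE hle i)))
            - α k • (F (g (fun i => v (Fin.castLE hle i))
                + β k • (z0 - g (fun i => v (Fin.castLE hle i)))
                - ((1 - β k) * α k) • (F (g (fun i => v (Fin.castLE hle i)))
                  + v ⟨2*k, by omega⟩))
              + v ⟨2*k+1, by omega⟩), ?_, ?_⟩
        · fun_prop
        · intro ω
          rw [hz k hk ω, hw k ω, hgz ω]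
          rfl
  have zmeas : ∀ k, Measurable (z k) := by
    intro k
    obtain ⟨g, hgm, hgz⟩ := zfact k
    have : z k = fun ω => g (fun i => ξ i ω) := funext hgz
    rw [this]
    exact hgm.comp (measurable_pi_lambda _ fun i => hmeas _)
  have wmeas : ∀ k, Measurable (w k) := by
    intro k
    have : w k = fun ω => z k ω + β k • (z0 - z k ω)
        - ((1 - β k) * α k) • (F (z k ω) + ξ (2*k) ω) := funext (hw k)
    rw [this]
    fun_prop
  have zint : ∀ k, Integrable (z k) μ := by
    intro k
    induction k with
    | zero =>
      have : z 0 = fun _ => z0 := funext hz0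
      rw [this]; exact integrable_const _
    | succ k ih =>
      rcases Nat.eq_zero_or_pos k with hk | hk
      · subst hk
        have : z 1 = fun ω => z0 - α 0 • (F z0 + ξ 0 ω) := funext hz1
        rw [this]
        exact (integrable_const z0).sub (((integrable_const (F z0)).add (hξint 0)).smul (α 0))
      · have hwk : Integrable (w k) μ := by
          have : w k = fun ω => z k ω + β k • (z0 - z k ω)
              - ((1 - β k) * α k) • (F (z k ω) + ξ (2*k) ω) := funext (hw k)
          rw [this]
          exact (ih.add (((integrable_const z0).sub ih).smul (β k))).sub
            (((Fcomp_int _ (zmeas k) ih).add (hξint (2*k))).smul ((1 - β k) * α k))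
        have : z (k+1) = fun ω => z k ω + β k • (z0 - z k ω)
            - α k • (F (w k ω) + ξ (2*k+1) ω) := funext (hz k hk)
        rw [this]
        exact (ih.add (((integrable_const z0).sub ih).smul (β k))).sub
          (((Fcomp_int _ (wmeas k) hwk).add (hξint _)).smul (α k))
  have wint : ∀ k, Integrable (w k) μ := by
    intro k
    have : w k = fun ω => z k ω + β k • (z0 - z k ω)
        - ((1 - β k) * α k) • (F (z k ω) + ξ (2*k) ω) := funext (hw k)
    rw [this]
    exact ((zint k).add (((integrable_const z0).sub (zint k)).smul (β k))).sub
      (((Fcomp_int _ (zmeas k) (zint k)).add (hξint _)).smul ((1 - β k) * α k))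
  refine ⟨?_, ?_, ?_⟩
  · -- part (i)
    have h1eq : (fun ω => (⟪F (z 1 ω), ξ 0 ω⟫ : ℝ))
        = fun ω => ⟪F ((fun _ : Ω => z0 - α 0 • F z0) ω - α 0 • ξ 0 ω), ξ 0 ω⟫ := by
      funext ω
      rw [hz1 ω, smul_add, sub_add_eq_sub_sub]
    rw [h1eq]
    have key := sfeg_key_bound μ L (α 0) hL.le (hα 0).le F hLip
      (fun _ => z0 - α 0 • F z0) (ξ 0) measurable_const (hmeas 0) (integrable_const _)
      (sfeg_indepFun_const μ _ _) (hint 0) (hmean 0)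
    rw [hvar 0] at key
    exact key
  · -- part (ii)
    intro k
    rcases Nat.eq_zero_or_pos k with hk | hk
    · subst hk
      have hw0 : ∀ ω, w 0 ω = z0 := by
        intro ω
        rw [hw 0 ω, hz0 ω, hβ0]
        simp
      have heq : (fun ω => (⟪F (w 0 ω), ξ (2*0) ω⟫ : ℝ)) = fun ω => ⟪F z0, ξ 0 ω⟫ := by
        funext ω
        rw [hw0 ω]
      rw [heq]
      have : (fun ω => (⟪F z0, ξ 0 ω⟫ : ℝ)) = fun ω => ⟪F z0, ξ 0 ω⟫ := rfl
      rw [show (∫ ω, (⟪F z0, ξ 0 ω⟫ : ℝ) ∂μ) = ⟪F z0, ∫ ω, ξ 0 ω ∂μ⟫ from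
        integral_inner (hξint 0) (F z0), hmean 0, inner_zero_right]
      simp [hβ0]
    · obtain ⟨g, hgm, hgz⟩ := zfact k
      have hc : 0 ≤ (1 - β k) * α k := mul_nonneg (by linarith [(hβ k hk).2]) (hα k).le
      have hφm : Measurable (fun a : EuclideanSpace ℝ (Fin d) =>
          a + β k • (z0 - a) - ((1 - β k) * α k) • F a) :=
        by fun_prop
      have hYm : Measurable (fun ω => z k ω + β k • (z0 - z k ω)
          - ((1 - β k) * α k) • F (z k ω)) := hφm.comp (zmeas k)
      have hYint : Integrable (fun ω => z k ω + β k • (z0 - z k ω)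
          - ((1 - β k) * α k) • F (z k ω)) μ :=
        ((zint k).add (((integrable_const z0).sub (zint k)).smul (β k))).sub
          ((Fcomp_int _ (zmeas k) (zint k)).smul ((1 - β k) * α k))
      have hindY : IndepFun (fun ω => z k ω + β k • (z0 - z k ω)
          - ((1 - β k) * α k) • F (z k ω)) (ξ (2*k)) μ := by
        have h := (sfeg_indep_tuple ξ hmeas hindep (2*k) (2*k) le_rfl).comp
          (φ := fun v => g v + β k • (z0 - g v) - ((1 - β k) * α k) • F (g v))
          (ψ := id) (hφm.comp hgm) measurable_id
        have hYeq : (fun ω => z k ω + β k • (z0 - z k ω)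
            - ((1 - β k) * α k) • F (z k ω))
            = (fun v => g v + β k • (z0 - g v) - ((1 - β k) * α k) • F (g v))
              ∘ (fun ω (i : Fin (2*k)) => ξ i ω) := by
          funext ω
          simp only [Function.comp_apply]
          rw [hgz ω]
        rw [hYeq]
        exact h
      have hweq : (fun ω => (⟪F (w k ω), ξ (2*k) ω⟫ : ℝ))
          = fun ω => ⟪F ((z k ω + β k • (z0 - z k ω) - ((1 - β k) * α k) • F (z k ω))
              - ((1 - β k) * α k) • ξ (2*k) ω), ξ (2*k) ω⟫ := by
        funext ω
        rw [hw k ω, smul_add, sub_add_eq_sub_sub]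
      rw [hweq]
      have key := sfeg_key_bound μ L ((1 - β k) * α k) hL.le hc F hLip
        _ (ξ (2*k)) hYm (hmeas _) hYint hindY (hint _) (hmean _)
      rw [hvar] at key
      calc _ ≤ L * ((1 - β k) * α k) * σsq (2*k) := key
      _ = L * (1 - β k) * α k * σsq (2*k) := by ring
  · -- part (iii)
    intro k
    rcases Nat.eq_zero_or_pos k with hk | hk
    · subst hk
      have hindY : IndepFun (z 1) (ξ 1) μ := by
        have h := (sfeg_indep_tuple ξ hmeas hindep 1 1 le_rfl).comp
          (φ := fun v : Fin 1 → EuclideanSpace ℝ (Fin d) => z0 - α 0 • (F z0 + v 0))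
          (ψ := id)
          (by fun_prop) measurable_id
        have hYeq : z 1 = (fun v : Fin 1 → EuclideanSpace ℝ (Fin d) =>
            z0 - α 0 • (F z0 + v 0)) ∘ (fun ω (i : Fin 1) => ξ i ω) := by
          funext ω
          simp only [Function.comp_apply]
          rw [hz1 ω]
          rfl
        rw [hYeq]
        exact h
      have key := sfeg_key_bound μ L 0 hL.le le_rfl F hLip
        (z 1) (ξ 1) (zmeas 1) (hmeas 1) (zint 1) hindY (hint 1) (hmean 1)
      simp only [zero_smul, sub_zero, mul_zero, zero_mul] at key
      have h2 : (0:ℝ) ≤ L * α 0 * σsq (2*0+1) :=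
        mul_nonneg (mul_nonneg hL.le (hα 0).le) (σnn _)
      calc |∫ ω, (⟪F (z (0+1) ω), ξ (2*0+1) ω⟫ : ℝ) ∂μ|
          = |∫ ω, (⟪F (z 1 ω), ξ 1 ω⟫ : ℝ) ∂μ| := by norm_num
      _ ≤ 0 := key
      _ ≤ L * α 0 * σsq (2*0+1) := h2
    · obtain ⟨g, hgm, hgz⟩ := zfact k
      have hle : 2*k ≤ 2*k+1 := by omega
      have hA : Measurable fun v : Fin (2*k+1) → EuclideanSpace ℝ (Fin d) =>
          g (fun i => v (Fin.castLE hle i)) :=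
        hgm.comp (measurable_pi_lambda _ fun i => measurable_pi_apply _)
      have hYm : Measurable (fun ω => z k ω + β k • (z0 - z k ω)
          - α k • F (w k ω)) :=
        by fun_prop
      have hYint : Integrable (fun ω => z k ω + β k • (z0 - z k ω)
          - α k • F (w k ω)) μ :=
        ((zint k).add (((integrable_const z0).sub (zint k)).smul (β k))).sub
          ((Fcomp_int _ (wmeas k) (wint k)).smul (α k))
      have hindY : IndepFun (fun ω => z k ω + β k • (z0 - z k ω)
          - α k • F (w k ω)) (ξ (2*k+1)) μ := by
        have hhm : Measurable (fun v : Fin (2*k+1) → EuclideanSpace ℝ (Fin d) =>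
            g (fun i => v (Fin.castLE hle i))
              + β k • (z0 - g (fun i => v (Fin.castLE hle i)))
              - α k • F (g (fun i => v (Fin.castLE hle i))
                + β k • (z0 - g (fun i => v (Fin.castLE hle i)))
                - ((1 - β k) * α k) • (F (g (fun i => v (Fin.castLE hle i)))
                  + v ⟨2*k, by omega⟩))) := by
          fun_prop
        have h := (sfeg_indep_tuple ξ hmeas hindep (2*k+1) (2*k+1) le_rfl).comp
          (ψ := id) hhm measurable_id
        have hYeq : (fun ω => z k ω + β k • (z0 - z k ω) - α k • F (w k ω))
            = (fun v : Fin (2*k+1) → EuclideanSpace ℝ (Fin d) =>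
            g (fun i => v (Fin.castLE hle i))
              + β k • (z0 - g (fun i => v (Fin.castLE hle i)))
              - α k • F (g (fun i => v (Fin.castLE hle i))
                + β k • (z0 - g (fun i => v (Fin.castLE hle i)))
                - ((1 - β k) * α k) • (F (g (fun i => v (Fin.castLE hle i)))
                  + v ⟨2*k, by omega⟩))) ∘ (fun ω (i : Fin (2*k+1)) => ξ i ω) := by
          funext ω
          simp only [Function.comp_apply]
          rw [hw k ω, hgz ω]
          rfl
        rw [hYeq]
        exact h
      have hzeq : (fun ω => (⟪F (z (k+1) ω), ξ (2*k+1) ω⟫ : ℝ))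
          = fun ω => ⟪F ((z k ω + β k • (z0 - z k ω) - α k • F (w k ω))
              - α k • ξ (2*k+1) ω), ξ (2*k+1) ω⟫ := by
        funext ω
        rw [hz k hk ω, smul_add, sub_add_eq_sub_sub]
      rw [hzeq]
      have key := sfeg_key_bound μ L (α k) hL.le (hα k).le F hLip
        _ (ξ (2*k+1)) hYm (hmeas _) hYint hindY (hint _) (hmean _)
      rw [hvar] at key
      exact key
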